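/- arXiv:2410.19092 — 3 statements merged into one kernel-verified Lean document; each statement's English description precedes it below -/
import Mathlib

section
/- Let ε ∈ (0, 1/2) and define φ(t) = ε^t/(ε^t + (1−ε)^t). Then for every t > 0, φ(t) ≥ ε + (ln 2)·(ε·log₂(ε) + ε·H(ε))·(t − 1), where H(ε) = −ε·log₂ ε − (1−ε)·log₂(1−ε) is the binary entropy function. -/
/-- Binary entropy function (base-2). -/
noncomputable def binEnt (x : ℝ) : ℝ :=
  -(x * Real.logb 2 x) - (1 - x) * Real.logb 2 (1 - x)

/-- `2(e^w - 1) ≤ w(e^w + 1)` for `w ≥ 0` (i.e. `tanh(w/2) ≤ w/2`). -/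
lemma aux_L1 (w : ℝ) (hw : 0 ≤ w) :
    2 * Real.exp w - 2 ≤ w * Real.exp w + w := by
  have hmono : Monotone (fun x : ℝ => x * Real.exp x + x - 2 * Real.exp x + 2) := by
    apply monotone_of_hasDerivAt_nonneg
      (f' := fun x : ℝ => (Real.exp x + x * Real.exp x) + 1 - 2 * Real.exp x)
    · intro x
      have h1 : HasDerivAt (fun x : ℝ => x * Real.exp x) (Real.exp x + x * Real.exp x) x := by
        have h := (hasDerivAt_id' x).mul (Real.hasDerivAt_exp x); simp only [one_mul] at h; exact h
      have h2 : HasDerivAt (fun x : ℝ => 2 * Real.exp x) (2 * Real.exp x) x :=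
        (Real.hasDerivAt_exp x).const_mul 2
      simpa using ((h1.add (hasDerivAt_id x)).sub h2).add_const 2
    · intro x
      simp only [Pi.zero_apply]
      have hp := Real.exp_pos x
      have h := Real.add_one_le_exp (-x)
      rw [Real.exp_neg x, ← one_div, le_div_iff₀ hp] at h
      nlinarith
  have := hmono hw
  norm_num [Real.exp_zero] at this
  nlinarith [this]

/-- `e^w - e^{-w} ≤ 2w` for `w ≤ 0`. -/
lemma aux_L2 (w : ℝ) (hw : w ≤ 0) :
    Real.exp w - Real.exp (-w) ≤ 2 * w := by
  rcases eq_or_lt_of_le hw with h | h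
  · simp [h]
  · have := Real.sinh_lt_self_iff.mpr h
    rw [Real.sinh_eq] at this
    linarith

/-- Tangent line bound for the convex function `u ↦ 1/(1+e^u)` on `[0,∞)`. -/
lemma aux_tangent (u v : ℝ) (hu : 0 ≤ u) (hv : 0 ≤ v) :
    1 / (1 + Real.exp v) - Real.exp v / (1 + Real.exp v) ^ 2 * (u - v) ≤
      1 / (1 + Real.exp u) := by
  set X := Real.exp u with hX
  set Y := Real.exp v with hY
  have hXpos : 0 < X := Real.exp_pos u
  have hYpos : 0 < Y := Real.exp_pos v
  have hXY : X = Y * Real.exp (u - v) := by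
    rw [hX, hY, ← Real.exp_add]; ring_nf
  set E := Real.exp (u - v) with hE
  have hEpos : 0 < E := Real.exp_pos _
  have hEinv : Real.exp (-(u - v)) = E⁻¹ := Real.exp_neg _
  -- B := 1 - E + (u-v)*E ≥ 0
  have hB : 0 ≤ 1 - E + (u - v) * E := by
    have h := Real.add_one_le_exp (-(u - v))
    rw [hEinv] at h
    have : (1 - (u - v)) * E ≤ 1 := by
      rw [← one_div, le_div_iff₀ hEpos] at h
      nlinarith
    nlinarith
  have inner : 0 ≤ (1 - E + (u - v)) + Y * (1 - E + (u - v) * E) := by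
    rcases le_total 0 (u - v) with hw | hw
    · have hY1 : 1 ≤ Y := by rw [hY]; exact Real.one_le_exp hv
      have hL1 := aux_L1 (u - v) hw
      rw [← hE] at hL1
      nlinarith [mul_nonneg (sub_nonneg.mpr hY1) hB]
    · have hYE : E⁻¹ ≤ Y := by
        rw [← hEinv, hY]
        exact Real.exp_le_exp.mpr (by linarith)
      have hL2 := aux_L2 (u - v) hw
      rw [hEinv, ← hE] at hL2
      have hEE : E * E⁻¹ = 1 := mul_inv_cancel₀ (ne_of_gt hEpos)
      nlinarith [mul_le_mul_of_nonneg_right hYE hB, hEE]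
  have key : 0 ≤ (1 + Y) * (Y - X) + Y * (u - v) * (1 + X) := by
    rw [hXY]
    nlinarith [mul_nonneg hYpos.le inner]
  have h1 : 0 < 1 + X := by linarith
  have h2 : 0 < 1 + Y := by linarith
  have expand : 1 / (1 + X) - (1 / (1 + Y) - Y / (1 + Y) ^ 2 * (u - v)) =
      ((1 + Y) * (Y - X) + Y * (u - v) * (1 + X)) / ((1 + X) * (1 + Y) ^ 2) := by
    field_simp
    ring
  have := div_nonneg key (le_of_lt (mul_pos h1 (pow_pos h2 2)))
  linarith [expand ▸ this]

/-- For `ε ∈ (0, 1/2)` and `φ(t) = ε^t / (ε^t + (1−ε)^t)`, every `t > 0`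
satisfies `φ(t) ≥ ε + ln 2 · (ε·log₂ ε + ε·H(ε)) · (t − 1)`. -/
theorem phi_tangent_line_lower_bound (ε : ℝ) (hε0 : 0 < ε) (hε : ε < 1 / 2)
    (t : ℝ) (ht : 0 < t) :
    ε + Real.log 2 * (ε * Real.logb 2 ε + ε * binEnt ε) * (t - 1) ≤
      ε ^ t / (ε ^ t + (1 - ε) ^ t) := by
  have h1ε : 0 < 1 - ε := by linarith
  have hr : 1 < (1 - ε) / ε := by
    rw [lt_div_iff₀ hε0]; linarith
  set b := Real.log ((1 - ε) / ε) with hbdef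
  have hb0 : 0 < b := Real.log_pos hr
  have hbe : Real.exp b = (1 - ε) / ε := Real.exp_log (by positivity)
  have hlog2 : Real.log 2 ≠ 0 := by
    have := Real.log_pos (by norm_num : (1:ℝ) < 2); linarith
  -- coefficient simplification
  have hblog : b = Real.log (1 - ε) - Real.log ε :=
    Real.log_div (ne_of_gt h1ε) (ne_of_gt hε0)
  have hC : Real.log 2 * (ε * Real.logb 2 ε + ε * binEnt ε) = -(ε * (1 - ε) * b) := by
    unfold binEnt Real.logb
    rw [hblog]
    field_simp
    ring
  -- rewrite φ(t)
  have hεt : (0:ℝ) < ε ^ t := Real.rpow_pos_of_pos hε0 t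
  have hφ : ε ^ t / (ε ^ t + (1 - ε) ^ t) = 1 / (1 + Real.exp (t * b)) := by
    have h1 : (1 - ε) ^ t = ε ^ t * Real.exp (t * b) := by
      have : (1 - ε) = ε * Real.exp b := by
        rw [hbe]; field_simp
      rw [this, Real.mul_rpow (le_of_lt hε0) (le_of_lt (Real.exp_pos b)),
        ← Real.exp_mul, mul_comm b t]
    rw [h1]
    have hne : ε ^ t ≠ 0 := ne_of_gt hεt
    have hne2 : (1:ℝ) + Real.exp (t * b) ≠ 0 := by positivity
    field_simp
  rw [hC, hφ]
  have htan := aux_tangent (t * b) b (by positivity) (le_of_lt hb0)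
  have he1 : 1 + Real.exp b = 1 / ε := by
    rw [hbe]; field_simp; ring
  have he2 : 1 / (1 + Real.exp b) = ε := by
    rw [he1]; field_simp
  have he3 : Real.exp b / (1 + Real.exp b) ^ 2 = ε * (1 - ε) := by
    rw [he1, hbe]
    field_simp
  rw [he2, he3] at htan
  have : ε * (1 - ε) * (t * b - b) = ε * (1 - ε) * b * (t - 1) := by ring
  rw [this] at htan
  linarith
end

section
/- Let X be a finite set, h* : X → {0,1}, ε* ∈ (0, 1/2), and let D be a distribution on X × {0,1} with independent label noise of level ε*, i.e. P_{(X,Y)∼D}(Y ≠ h*(X) | X = x) = ε* for all x in the support of the marginal of D. Let S = {(X_i,Y_i)}_{i=1}^N be i.i.d. from D with P(S consistent) > 0, and define the effective training noise ε̂_tr = P(Y_1 ≠ h*(X_1) | S consistent). Then ε̂_tr ≤ ε*, and |ε̂_tr − ε*| ≤ |ln(2)·(ε*·log₂(ε*) + ε*·H(ε*))| · (N−1) · D_max / P(S consistent), where H(ε) = −ε·log₂ ε − (1−ε)·log₂(1−ε) is binary entropy and D_max = max_x P_{(X,Y)∼D}(X = x). -/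
open Finset

/-- A probability distribution on a finite type, given by its mass function. -/
structure FinDist (α : Type*) [Fintype α] where
  p : α → ℝ
  nonneg : ∀ a, 0 ≤ p a
  sum_one : ∑ a, p a = 1

namespace FinDist

variable {α : Type*} [Fintype α]

/-- Probability of an event. -/
noncomputable def prob (D : FinDist α) (E : Set α) : ℝ :=
  ∑ a, E.indicator D.p a

/-- Expectation of a real-valued random variable. -/
noncomputable def expect (D : FinDist α) (f : α → ℝ) : ℝ :=
  ∑ a, D.p a * f a

/-- The `N`-fold i.i.d. product of a distribution (the law of an i.i.d. sample). -/
noncomputable def pow (D : FinDist α) (N : ℕ) : FinDist (Fin N → α) where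
  p := fun s => ∏ i, D.p (s i)
  nonneg := fun s => Finset.prod_nonneg fun i _ => D.nonneg _
  sum_one := by
    classical
    rw [← Fintype.sum_pow D.p N, D.sum_one, one_pow]

end FinDist

/-- A training set is consistent if equal inputs receive equal labels. -/
def ConsistentS {X : Type*} {N : ℕ} (s : Fin N → X × Bool) : Prop :=
  ∀ i j, (s i).1 = (s j).1 → (s i).2 = (s j).2

/-- A hypothesis interpolates a training set if it fits every sample
(zero empirical risk). -/
def Interpolates {X : Type*} {N : ℕ} (h : X → Bool) (s : Fin N → X × Bool) : Prop :=
  ∀ i, h (s i).1 = (s i).2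

/-- Population risk (generalization error) of a hypothesis. -/
noncomputable def risk {X : Type*} [Fintype X] (D : FinDist (X × Bool)) (h : X → Bool) : ℝ :=
  D.prob {a | h a.1 ≠ a.2}

/-- Peak marginal probability `D_max = max_x P(X = x)`. -/
noncomputable def dmax {X : Type*} [Fintype X] (D : FinDist (X × Bool)) : ℝ :=
  ⨆ x : X, D.prob {a | a.1 = x}

set_option linter.unusedSectionVars false
set_option linter.unusedVariables false
set_option linter.unreachableTactic false
set_option linter.unusedTactic false
set_option maxHeartbeats 1000000
open scoped Classical

namespace NoiseAux

variable {X : Type} [Fintype X] {N : ℕ}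

/-- label weight: probability of label `b` at point `x` given flip prob `ε`. -/
noncomputable def cw (ε : ℝ) (hs : X → Bool) (x : X) (b : Bool) : ℝ := if b = hs x then 1 - ε else ε

def Cons (xs : Fin N → X) (ls : Fin N → Bool) : Prop := ∀ i j, xs i = xs j → ls i = ls j

noncomputable def kk (xs : Fin N → X) (i₀ : Fin N) : ℕ := (Finset.univ.filter fun i => xs i = xs i₀).card

noncomputable def Wsum (ε : ℝ) (hs : X → Bool) (xs : Fin N → X) : ℝ :=
  ∑ ls : Fin N → Bool, if Cons xs ls then ∏ i, cw ε hs (xs i) (ls i) else 0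

noncomputable def Fsum (ε : ℝ) (hs : X → Bool) (i₀ : Fin N) (xs : Fin N → X) : ℝ :=
  ∑ ls : Fin N → Bool, if Cons xs ls ∧ ls i₀ ≠ hs (xs i₀) then ∏ i, cw ε hs (xs i) (ls i) else 0

noncomputable def Usum (ε : ℝ) (hs : X → Bool) (i₀ : Fin N) (xs : Fin N → X) : ℝ :=
  ∑ ls : Fin N → Bool, if Cons xs ls ∧ ls i₀ = hs (xs i₀) then ∏ i, cw ε hs (xs i) (ls i) else 0

variable {ε : ℝ} {hs : X → Bool} {xs : Fin N → X} {i₀ : Fin N}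

lemma cw_nonneg (hε0 : 0 < ε) (hε : ε < 1/2) (x : X) (b : Bool) : 0 ≤ cw ε hs x b := by
  unfold cw; split_ifs <;> linarith

lemma prod_cw_nonneg (hε0 : 0 < ε) (hε : ε < 1/2) (ls : Fin N → Bool) :
    0 ≤ ∏ i, cw ε hs (xs i) (ls i) :=
  Finset.prod_nonneg fun i _ => cw_nonneg hε0 hε _ _

lemma one_le_kk : 1 ≤ kk xs i₀ := by
  have : i₀ ∈ Finset.univ.filter fun i => xs i = xs i₀ := by simp
  exact Finset.card_pos.2 ⟨i₀, this⟩

lemma W_eq : Wsum ε hs xs = Usum ε hs i₀ xs + Fsum ε hs i₀ xs := by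
  unfold Wsum Usum Fsum
  rw [← Finset.sum_add_distrib]
  refine Finset.sum_congr rfl fun ls _ => ?_
  by_cases h1 : Cons xs ls
  · by_cases h2 : ls i₀ = hs (xs i₀) <;> simp [h1, h2]
  · simp [h1]

lemma Fsum_nonneg (hε0 : 0 < ε) (hε : ε < 1/2) : 0 ≤ Fsum ε hs i₀ xs :=
  Finset.sum_nonneg fun ls _ => by
    split_ifs
    · exact prod_cw_nonneg hε0 hε ls
    · exact le_refl 0

lemma Usum_nonneg (hε0 : 0 < ε) (hε : ε < 1/2) : 0 ≤ Usum ε hs i₀ xs :=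
  Finset.sum_nonneg fun ls _ => by
    split_ifs
    · exact prod_cw_nonneg hε0 hε ls
    · exact le_refl 0


noncomputable def flip (xs : Fin N → X) (i₀ : Fin N) (ls : Fin N → Bool) : Fin N → Bool :=
  fun i => if xs i = xs i₀ then !(ls i) else ls i

lemma flip_flip (ls : Fin N → Bool) : flip xs i₀ (flip xs i₀ ls) = ls := by
  funext i; unfold flip; by_cases h : xs i = xs i₀ <;> simp [h]

lemma flip_bijective : Function.Bijective (flip xs i₀) :=
  Function.Involutive.bijective fun ls => flip_flip ls

lemma bool_ne (b c : Bool) (h : b ≠ c) : (!b) = c := by revert h; cases b <;> cases c <;> decide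

lemma cons_flip {ls : Fin N → Bool} (h : Cons xs ls) : Cons xs (flip xs i₀ ls) := by
  intro i j hij
  unfold flip
  by_cases hi : xs i = xs i₀
  · have hj : xs j = xs i₀ := hij.symm.trans hi
    simp [hi, hj, h i j hij]
  · have hj : ¬ xs j = xs i₀ := fun hj => hi (hij.trans hj)
    simp [hi, hj, h i j hij]

lemma prod_flip {ls : Fin N → Bool} (hc : Cons xs ls) (hf : ls i₀ ≠ hs (xs i₀)) :
    (1-ε)^(kk xs i₀) * ∏ i, cw ε hs (xs i) (ls i)
      = ε^(kk xs i₀) * ∏ i, cw ε hs (xs i) (flip xs i₀ ls i) := by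
  have h1 : ∀ lls : Fin N → Bool, (∏ i, cw ε hs (xs i) (lls i)) =
      (∏ i ∈ univ.filter (fun i => xs i = xs i₀), cw ε hs (xs i) (lls i)) *
      (∏ i ∈ univ.filter (fun i => ¬ xs i = xs i₀), cw ε hs (xs i) (lls i)) :=
    fun lls => (Finset.prod_filter_mul_prod_filter_not univ _ _).symm
  rw [h1 ls, h1 (flip xs i₀ ls)]
  have hoff : ∀ i ∈ univ.filter (fun i => ¬ xs i = xs i₀),
      cw ε hs (xs i) (flip xs i₀ ls i) = cw ε hs (xs i) (ls i) := by
    intro i hi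
    have : ¬ xs i = xs i₀ := (Finset.mem_filter.1 hi).2
    unfold flip; rw [if_neg this]
  rw [Finset.prod_congr rfl hoff]
  have hK1 : (∏ i ∈ univ.filter (fun i => xs i = xs i₀), cw ε hs (xs i) (ls i))
      = ε ^ kk xs i₀ := by
    have : ∀ i ∈ univ.filter (fun i => xs i = xs i₀), cw ε hs (xs i) (ls i) = ε := by
      intro i hi
      have hxi : xs i = xs i₀ := (Finset.mem_filter.1 hi).2
      have hli : ls i = ls i₀ := hc i i₀ hxi
      unfold cw
      rw [hxi, hli, if_neg hf]
    rw [Finset.prod_congr rfl this, Finset.prod_const]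
    rfl
  have hK2 : (∏ i ∈ univ.filter (fun i => xs i = xs i₀), cw ε hs (xs i) (flip xs i₀ ls i))
      = (1-ε) ^ kk xs i₀ := by
    have : ∀ i ∈ univ.filter (fun i => xs i = xs i₀), cw ε hs (xs i) (flip xs i₀ ls i) = 1-ε := by
      intro i hi
      have hxi : xs i = xs i₀ := (Finset.mem_filter.1 hi).2
      have hli : ls i = ls i₀ := hc i i₀ hxi
      have hfl : flip xs i₀ ls i = hs (xs i₀) := by
        unfold flip; rw [if_pos hxi, hli]; exact bool_ne _ _ hf
      unfold cw
      rw [hxi, hfl, if_pos rfl]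
    rw [Finset.prod_congr rfl this, Finset.prod_const]
    rfl
  rw [hK1, hK2]; ring

lemma F_eq_U :
    (1-ε)^(kk xs i₀) * Fsum ε hs i₀ xs = ε^(kk xs i₀) * Usum ε hs i₀ xs := by
  unfold Fsum Usum
  rw [Finset.mul_sum, Finset.mul_sum]
  refine Fintype.sum_bijective (flip xs i₀) flip_bijective _ _ fun ls => ?_
  by_cases h : Cons xs ls ∧ ls i₀ ≠ hs (xs i₀)
  · rw [if_pos h]
    have hcond : Cons xs (flip xs i₀ ls) ∧ (flip xs i₀ ls) i₀ = hs (xs i₀) := by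
      refine ⟨cons_flip h.1, ?_⟩
      show (if xs i₀ = xs i₀ then !(ls i₀) else ls i₀) = hs (xs i₀)
      rw [if_pos rfl]; exact bool_ne _ _ h.2
    rw [if_pos hcond]
    exact prod_flip h.1 h.2
  · rw [if_neg h]
    have hcond : ¬ (Cons xs (flip xs i₀ ls) ∧ (flip xs i₀ ls) i₀ = hs (xs i₀)) := by
      rintro ⟨hc, he⟩
      apply h
      have hc' : Cons xs ls := by
        have := cons_flip (i₀ := i₀) hc
        rwa [flip_flip] at this
      refine ⟨hc', fun hne => ?_⟩
      have : (flip xs i₀ ls) i₀ = !(ls i₀) := by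
        show (if xs i₀ = xs i₀ then !(ls i₀) else ls i₀) = !(ls i₀); rw [if_pos rfl]
      rw [this, hne] at he
      simp at he
    rw [if_neg hcond]
    simp

lemma Usum_le (hε0 : 0 < ε) (hε : ε < 1/2) :
    Usum ε hs i₀ xs ≤ (1-ε)^(kk xs i₀) := by
  set g : Fin N → Bool → ℝ := fun i b =>
    if xs i = xs i₀ then (if b = hs (xs i₀) then cw ε hs (xs i) b else 0)
    else cw ε hs (xs i) b with hg
  have step1 : Usum ε hs i₀ xs ≤ ∑ ls : Fin N → Bool, ∏ i, g i (ls i) := by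
    apply Finset.sum_le_sum; intro ls _
    by_cases h : Cons xs ls ∧ ls i₀ = hs (xs i₀)
    · rw [if_pos h]
      apply le_of_eq
      refine Finset.prod_congr rfl fun i _ => ?_
      by_cases hi : xs i = xs i₀
      · have hv : ls i = hs (xs i₀) := (h.1 i i₀ hi).trans h.2
        rw [hg]; simp only []
        rw [if_pos hi, if_pos hv]
      · rw [hg]; simp only []
        rw [if_neg hi]
    · rw [if_neg h]
      apply Finset.prod_nonneg; intro i _
      rw [hg]; simp only []
      by_cases hi : xs i = xs i₀
      · rw [if_pos hi]
        split_ifs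
        · exact cw_nonneg hε0 hε _ _
        · exact le_refl 0
      · rw [if_neg hi]; exact cw_nonneg hε0 hε _ _
  have step2 : (∑ ls : Fin N → Bool, ∏ i, g i (ls i)) = ∏ i, ∑ b, g i b := by
    rw [show (Finset.univ : Finset (Fin N → Bool)) = Fintype.piFinset (fun _ => Finset.univ) from
      (Fintype.piFinset_univ).symm]
    exact (Finset.prod_univ_sum _ _).symm
  have step3 : ∀ i, (∑ b, g i b) = if xs i = xs i₀ then 1-ε else 1 := by
    intro i
    rw [hg]; simp only []
    by_cases hi : xs i = xs i₀
    · rw [if_pos hi]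
      simp only [if_pos hi]
      rw [Fintype.sum_bool]
      cases hb : hs (xs i₀) <;> simp [cw, hi, hb]
    · rw [if_neg hi]
      simp only [if_neg hi]
      rw [Fintype.sum_bool]
      unfold cw
      cases hb : hs (xs i) <;> simp [hb] <;> ring
  have step4 : (∏ i, (if xs i = xs i₀ then 1-ε else 1)) = (1-ε)^(kk xs i₀) := by
    rw [← Finset.prod_filter_mul_prod_filter_not univ (fun i => xs i = xs i₀)]
    have e1 : ∀ i ∈ univ.filter (fun i => xs i = xs i₀),
        (if xs i = xs i₀ then 1-ε else 1) = 1-ε := by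
      intro i hi; rw [if_pos (Finset.mem_filter.1 hi).2]
    have e2 : ∀ i ∈ univ.filter (fun i => ¬ xs i = xs i₀),
        (if xs i = xs i₀ then 1-ε else 1) = 1 := by
      intro i hi; rw [if_neg (Finset.mem_filter.1 hi).2]
    rw [Finset.prod_congr rfl e1, Finset.prod_congr rfl e2, Finset.prod_const,
      Finset.prod_const_one, mul_one]
    rfl
  calc Usum ε hs i₀ xs ≤ ∑ ls : Fin N → Bool, ∏ i, g i (ls i) := step1
    _ = ∏ i, ∑ b, g i b := step2
    _ = ∏ i, (if xs i = xs i₀ then 1-ε else 1) := Finset.prod_congr rfl fun i _ => step3 i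
    _ = (1-ε)^(kk xs i₀) := step4


lemma T_bounds (hε0 : 0 < ε) (hε : ε < 1/2) :
    0 ≤ ε * Wsum ε hs xs - Fsum ε hs i₀ xs ∧
    ε * Wsum ε hs xs - Fsum ε hs i₀ xs
      ≤ ε * (1-ε) * ((1-ε)^(kk xs i₀ - 1) - ε^(kk xs i₀ - 1)) := by
  obtain ⟨m, hm⟩ : ∃ m, kk xs i₀ = m + 1 :=
    ⟨kk xs i₀ - 1, by have := one_le_kk (xs := xs) (i₀ := i₀); omega⟩
  have hm1 : kk xs i₀ - 1 = m := by omega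
  have hεa : ε ≤ 1 - ε := by linarith
  have ha1 : (0:ℝ) < 1 - ε := by linarith
  have hh0 : 0 ≤ ε * (1-ε) * ((1-ε)^m - ε^m) := by
    have : ε^m ≤ (1-ε)^m := pow_le_pow_left₀ hε0.le hεa m
    have : (0:ℝ) ≤ (1-ε)^m - ε^m := by linarith
    positivity
  have hU0 : 0 ≤ Usum ε hs i₀ xs := Usum_nonneg hε0 hε
  have hUle : Usum ε hs i₀ xs ≤ (1-ε)^(kk xs i₀) := Usum_le hε0 hε
  have hpos : (0:ℝ) < (1-ε)^(kk xs i₀) := pow_pos ha1 _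
  have key : (1-ε)^(kk xs i₀) * (ε * Wsum ε hs xs - Fsum ε hs i₀ xs)
      = Usum ε hs i₀ xs * (ε * (1-ε) * ((1-ε)^m - ε^m)) := by
    rw [W_eq (i₀ := i₀)]
    have hFU := F_eq_U (ε := ε) (hs := hs) (xs := xs) (i₀ := i₀)
    rw [hm] at hFU ⊢
    simp only [pow_succ] at hFU ⊢
    linear_combination (ε - 1) * hFU
  rw [hm1]
  constructor
  · by_contra hlt
    push_neg at hlt
    have hneg := mul_neg_of_pos_of_neg hpos hlt
    rw [key] at hneg
    nlinarith [mul_nonneg hU0 hh0]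
  · have h2 : (1-ε)^(kk xs i₀) * (ε * Wsum ε hs xs - Fsum ε hs i₀ xs)
        ≤ (1-ε)^(kk xs i₀) * (ε * (1-ε) * ((1-ε)^m - ε^m)) := by
      rw [key]
      exact mul_le_mul_of_nonneg_right hUle hh0
    exact (mul_le_mul_iff_right₀ hpos).1 h2

lemma pow_sub_pow_le {a b : ℝ} (hb : 0 ≤ b) (hba : b ≤ a) (ha : a ≤ 1) (m : ℕ) :
    a^m - b^m ≤ m * (a - b) := by
  induction m with
  | zero => simp
  | succ n ih =>
    have h1 : b^n ≤ 1 := pow_le_one₀ hb (hba.trans ha)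
    have h2 : b^n ≤ a^n := pow_le_pow_left₀ hb hba n
    have h3 : 0 ≤ b^n := pow_nonneg hb n
    rw [pow_succ, pow_succ]
    push_cast
    nlinarith [ih, mul_le_mul_of_nonneg_left ih (hb.trans hba)]

lemma sub_le_log_sub {a b : ℝ} (hb : 0 < b) (hba : b ≤ a) (ha : a ≤ 1) :
    a - b ≤ Real.log a - Real.log b := by
  have ha0 : 0 < a := lt_of_lt_of_le hb hba
  have h1 : Real.log (b / a) ≤ b / a - 1 := Real.log_le_sub_one_of_pos (by positivity)
  rw [Real.log_div hb.ne' ha0.ne'] at h1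
  have h2 : b / a * a = b := div_mul_cancel₀ b ha0.ne'
  nlinarith [div_nonneg hb.le ha0.le]

lemma key_ineq (hε0 : 0 < ε) (hε : ε < 1/2) (m : ℕ) :
    ε * (1-ε) * ((1-ε)^m - ε^m)
      ≤ ε * (1-ε) * (Real.log (1-ε) - Real.log ε) * m := by
  have hεa : ε ≤ 1 - ε := by linarith
  have h1 : (1-ε)^m - ε^m ≤ m * ((1-ε) - ε) := pow_sub_pow_le hε0.le hεa (by linarith) m
  have h2 : (1-ε) - ε ≤ Real.log (1-ε) - Real.log ε := sub_le_log_sub hε0 hεa (by linarith)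
  have h3 : (0:ℝ) ≤ ε * (1-ε) := by nlinarith
  have h4 : (1-ε)^m - ε^m ≤ (Real.log (1-ε) - Real.log ε) * m := by
    calc (1-ε)^m - ε^m ≤ m * ((1-ε) - ε) := h1
      _ ≤ m * (Real.log (1-ε) - Real.log ε) := by
          exact mul_le_mul_of_nonneg_left h2 (Nat.cast_nonneg m)
      _ = (Real.log (1-ε) - Real.log ε) * m := mul_comm _ _
  calc ε * (1-ε) * ((1-ε)^m - ε^m)
      ≤ ε * (1-ε) * ((Real.log (1-ε) - Real.log ε) * m) := mul_le_mul_of_nonneg_left h4 h3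
    _ = ε * (1-ε) * (Real.log (1-ε) - Real.log ε) * m := by ring


end NoiseAux

section Outer
open NoiseAux
open scoped Classical

variable {X : Type} [Fintype X]

lemma FinDist.prob_eq_sum_ite {α : Type*} [Fintype α] (D : FinDist α) (E : Set α) :
    D.prob E = ∑ a, if a ∈ E then D.p a else 0 := by
  unfold FinDist.prob
  refine Finset.sum_congr rfl fun a _ => ?_
  rw [Set.indicator_apply]

lemma prob_pow_eq (D : FinDist (X × Bool)) (N : ℕ) (E : Set (Fin N → X × Bool)) :
    (D.pow N).prob E = ∑ xs : Fin N → X, ∑ ls : Fin N → Bool,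
      (if (fun i => (xs i, ls i)) ∈ E then ∏ i, D.p (xs i, ls i) else 0) := by
  rw [FinDist.prob_eq_sum_ite]
  rw [← Equiv.sum_comp (Equiv.arrowProdEquivProdArrow (Fin N) (fun _ => X) (fun _ => Bool)).symm
    (fun s => if s ∈ E then (D.pow N).p s else 0), Fintype.sum_prod_type]
  rfl

lemma prob_fst_eq (D : FinDist (X × Bool)) (x : X) :
    D.prob {a | a.1 = x} = D.p (x, true) + D.p (x, false) := by
  rw [FinDist.prob_eq_sum_ite, Fintype.sum_prod_type]
  have h : ∀ x', (∑ b, if (x', b) ∈ {a : X × Bool | a.1 = x} then D.p (x', b) else 0)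
      = if x' = x then D.p (x, true) + D.p (x, false) else 0 := by
    intro x'
    rw [Fintype.sum_bool]
    by_cases h : x' = x <;> simp [Set.mem_setOf_eq, h]
  rw [Finset.sum_congr rfl fun x' _ => h x', Finset.sum_ite_eq' Finset.univ x]
  simp

lemma prob_flip_eq (D : FinDist (X × Bool)) (hs : X → Bool) (x : X) :
    D.prob {a | a.1 = x ∧ a.2 ≠ hs x} = D.p (x, !hs x) := by
  rw [FinDist.prob_eq_sum_ite, Fintype.sum_prod_type]
  cases hb : hs x <;>
    simp [Set.mem_setOf_eq, hb, Fintype.sum_bool, Finset.sum_ite_eq']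

lemma m_sum (D : FinDist (X × Bool)) : ∑ x : X, (D.p (x, true) + D.p (x, false)) = 1 := by
  rw [← D.sum_one, Fintype.sum_prod_type]
  refine Finset.sum_congr rfl fun x _ => ?_
  rw [Fintype.sum_bool]

lemma p_eq (D : FinDist (X × Bool)) (hs : X → Bool) (ε : ℝ)
    (hindep : ∀ x, D.prob {a | a.1 = x ∧ a.2 ≠ hs x} = ε * D.prob {a | a.1 = x}) :
    ∀ x b, D.p (x, b) = (D.p (x, true) + D.p (x, false)) * NoiseAux.cw ε hs x b := by
  intro x b
  have hflip : D.p (x, !hs x) = ε * (D.p (x, true) + D.p (x, false)) := by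
    rw [← prob_flip_eq D hs x, ← prob_fst_eq D x]
    exact hindep x
  cases hb : hs x
  · rw [hb] at hflip; simp only [Bool.not_false] at hflip
    cases b
    · have hcw : NoiseAux.cw ε hs x false = 1 - ε := by
        unfold NoiseAux.cw; rw [if_pos hb.symm]
      rw [hcw]; linear_combination -hflip
    · have hcw : NoiseAux.cw ε hs x true = ε := by
        unfold NoiseAux.cw
        rw [if_neg (show ¬ (true = hs x) from fun h => by rw [hb] at h; exact Bool.noConfusion h)]
      rw [hcw]; linear_combination hflip
  · rw [hb] at hflip; simp only [Bool.not_true] at hflip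
    cases b
    · have hcw : NoiseAux.cw ε hs x false = ε := by
        unfold NoiseAux.cw
        rw [if_neg (show ¬ (false = hs x) from fun h => by rw [hb] at h; exact Bool.noConfusion h)]
      rw [hcw]; linear_combination hflip
    · have hcw : NoiseAux.cw ε hs x true = 1 - ε := by
        unfold NoiseAux.cw; rw [if_pos hb.symm]
      rw [hcw]; linear_combination -hflip

lemma count_eq (m : X → ℝ) (hm1 : ∑ x, m x = 1) {N : ℕ} (i₀ i : Fin N) (hne : i ≠ i₀) :
    ∑ xs : Fin N → X, (∏ j, m (xs j)) * (if xs i = xs i₀ then (1:ℝ) else 0)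
      = ∑ x, m x * m x := by
  set g : X → Fin N → X → ℝ := fun x j y =>
    if j = i₀ ∨ j = i then (if y = x then m y else 0) else m y with hg
  have stepA : ∀ xs : Fin N → X,
      (∑ x, ∏ j, g x j (xs j)) = (∏ j, m (xs j)) * (if xs i = xs i₀ then (1:ℝ) else 0) := by
    intro xs
    have hx : ∀ x, (∏ j, g x j (xs j))
        = if x = xs i₀ ∧ xs i = xs i₀ then ∏ j, m (xs j) else 0 := by
      intro x
      by_cases hcond : x = xs i₀ ∧ xs i = xs i₀
      · rw [if_pos hcond]
        refine Finset.prod_congr rfl fun j _ => ?_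
        show (if j = i₀ ∨ j = i then (if xs j = x then m (xs j) else 0) else m (xs j)) = m (xs j)
        by_cases hj : j = i₀ ∨ j = i
        · rw [if_pos hj]
          have hxj : xs j = x := by
            rcases hj with hj | hj
            · rw [hj]; exact hcond.1.symm
            · rw [hj]; exact hcond.2.trans hcond.1.symm
          rw [if_pos hxj]
        · rw [if_neg hj]
      · rw [if_neg hcond]
        by_cases h1 : x = xs i₀
        · have h2 : ¬ xs i = x := fun h => hcond ⟨h1, h.trans h1⟩
          apply Finset.prod_eq_zero (Finset.mem_univ i)
          show (if i = i₀ ∨ i = i then (if xs i = x then m (xs i) else 0) else m (xs i)) = 0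
          rw [if_pos (Or.inr rfl : i = i₀ ∨ i = i), if_neg h2]
        · have h2 : ¬ xs i₀ = x := fun h => h1 h.symm
          apply Finset.prod_eq_zero (Finset.mem_univ i₀)
          show (if i₀ = i₀ ∨ i₀ = i then (if xs i₀ = x then m (xs i₀) else 0) else m (xs i₀)) = 0
          rw [if_pos (Or.inl rfl : i₀ = i₀ ∨ i₀ = i), if_neg h2]
    calc (∑ x, ∏ j, g x j (xs j))
        = ∑ x, if x = xs i₀ ∧ xs i = xs i₀ then ∏ j, m (xs j) else 0 :=
          Finset.sum_congr rfl fun x _ => hx x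
      _ = (∏ j, m (xs j)) * (if xs i = xs i₀ then (1:ℝ) else 0) := by
          by_cases hc : xs i = xs i₀ <;> simp [hc, Finset.sum_ite_eq']
  have stepB : ∀ x, (∑ xs : Fin N → X, ∏ j, g x j (xs j)) = m x * m x := by
    intro x
    have h1 : (∑ xs : Fin N → X, ∏ j, g x j (xs j)) = ∏ j, ∑ y, g x j y := by
      rw [show (Finset.univ : Finset (Fin N → X)) = Fintype.piFinset (fun _ => Finset.univ) from
        (Fintype.piFinset_univ).symm]
      exact (Finset.prod_univ_sum _ _).symm
    have h2 : ∀ j, (∑ y, g x j y) = if j = i₀ ∨ j = i then m x else 1 := by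
      intro j
      rw [hg]; simp only []
      by_cases hj : j = i₀ ∨ j = i
      · simp only [if_pos hj]
        rw [Finset.sum_ite_eq' Finset.univ x (fun y => m y)]
        simp
      · simp only [if_neg hj]
        exact hm1
    have hcard : (Finset.univ.filter fun j : Fin N => j = i₀ ∨ j = i).card = 2 := by
      have hset : (Finset.univ.filter fun j : Fin N => j = i₀ ∨ j = i) = {i₀, i} := by
        ext j
        simp [Finset.mem_insert, Finset.mem_singleton, Finset.mem_filter]
      rw [hset, Finset.card_insert_of_notMem
          (by simp only [Finset.mem_singleton]; exact fun h => hne h.symm),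
        Finset.card_singleton]
    calc (∑ xs : Fin N → X, ∏ j, g x j (xs j)) = ∏ j, ∑ y, g x j y := h1
      _ = ∏ j, (if j = i₀ ∨ j = i then m x else 1) := Finset.prod_congr rfl fun j _ => h2 j
      _ = (∏ j ∈ Finset.univ.filter (fun j => j = i₀ ∨ j = i),
            (if j = i₀ ∨ j = i then m x else 1)) *
          (∏ j ∈ Finset.univ.filter (fun j => ¬ (j = i₀ ∨ j = i)),
            (if j = i₀ ∨ j = i then m x else 1)) :=
          (Finset.prod_filter_mul_prod_filter_not Finset.univ _ _).symm
      _ = m x * m x := by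
          rw [Finset.prod_congr rfl (fun j hj => if_pos (Finset.mem_filter.1 hj).2),
            Finset.prod_congr rfl (fun j hj => if_neg (Finset.mem_filter.1 hj).2),
            Finset.prod_const, Finset.prod_const_one, mul_one, hcard]
          ring
  calc ∑ xs : Fin N → X, (∏ j, m (xs j)) * (if xs i = xs i₀ then (1:ℝ) else 0)
      = ∑ xs : Fin N → X, ∑ x, ∏ j, g x j (xs j) :=
        Finset.sum_congr rfl fun xs _ => (stepA xs).symm
    _ = ∑ x, ∑ xs : Fin N → X, ∏ j, g x j (xs j) := Finset.sum_comm
    _ = ∑ x, m x * m x := Finset.sum_congr rfl fun x _ => stepB x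

end Outer



/-- under independent label noise of level `ε* ∈ (0,1/2)`, the effective
training-set noise `ε̂_tr = P(Y₁ ≠ h*(X₁) | S consistent)` satisfies `ε̂_tr ≤ ε*` and
`|ε̂_tr − ε*| ≤ |ln 2 · (ε*·log₂ ε* + ε*·H(ε*))| · (N−1) · D_max / P(S consistent)`. -/
theorem effective_training_noise_bound
    (X : Type) [Fintype X] (D : FinDist (X × Bool)) (hstar : X → Bool)
    (εstar : ℝ) (hε0 : 0 < εstar) (hε : εstar < 1 / 2)
    (hindep : ∀ x : X,
      D.prob {a | a.1 = x ∧ a.2 ≠ hstar x} = εstar * D.prob {a | a.1 = x})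
    (hεdef : εstar = D.prob {a | a.2 ≠ hstar a.1})
    (N : ℕ) (hN : 1 ≤ N)
    (hcons : 0 < (D.pow N).prob {s | ConsistentS s}) :
    (D.pow N).prob {s | (s ⟨0, hN⟩).2 ≠ hstar (s ⟨0, hN⟩).1 ∧ ConsistentS s} /
        (D.pow N).prob {s | ConsistentS s} ≤ εstar ∧
    |(D.pow N).prob {s | (s ⟨0, hN⟩).2 ≠ hstar (s ⟨0, hN⟩).1 ∧ ConsistentS s} /
          (D.pow N).prob {s | ConsistentS s} - εstar| ≤
      |Real.log 2 * (εstar * Real.logb 2 εstar + εstar * binEnt εstar)| *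
        ((N : ℝ) - 1) * dmax D / (D.pow N).prob {s | ConsistentS s} := by
    classical
  set i₀ : Fin N := ⟨0, hN⟩ with hi₀
  set mD : X → ℝ := fun x => D.p (x, true) + D.p (x, false) with hmD
  have hmnn : ∀ x, 0 ≤ mD x := fun x => add_nonneg (D.nonneg _) (D.nonneg _)
  have hm1 : ∑ x, mD x = 1 := m_sum D
  have hpx : ∀ x b, D.p (x, b) = mD x * NoiseAux.cw εstar hstar x b := p_eq D hstar εstar hindep
  set M : (Fin N → X) → ℝ := fun xs => ∏ i, mD (xs i) with hM
  have hMnn : ∀ xs, 0 ≤ M xs := fun xs => Finset.prod_nonneg fun i _ => hmnn _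
  set Pc := (D.pow N).prob {s | ConsistentS s} with hPcdef
  set A := (D.pow N).prob {s | (s i₀).2 ≠ hstar (s i₀).1 ∧ ConsistentS s} with hAdef
  have hprod : ∀ (xs : Fin N → X) (ls : Fin N → Bool),
      (∏ i, D.p (xs i, ls i)) = M xs * ∏ i, NoiseAux.cw εstar hstar (xs i) (ls i) := by
    intro xs ls
    rw [hM, ← Finset.prod_mul_distrib]
    exact Finset.prod_congr rfl fun i _ => hpx _ _
  have hPc : Pc = ∑ xs : Fin N → X, M xs * NoiseAux.Wsum εstar hstar xs := by
    rw [hPcdef, prob_pow_eq]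
    refine Finset.sum_congr rfl fun xs _ => ?_
    simp only [NoiseAux.Wsum]
    rw [Finset.mul_sum]
    refine Finset.sum_congr rfl fun ls _ => ?_
    rw [if_congr (show ((fun i => (xs i, ls i)) ∈ {s : Fin N → X × Bool | ConsistentS s})
        ↔ NoiseAux.Cons xs ls from Iff.rfl) (hprod xs ls) rfl]
    split_ifs <;> simp
  have hA : A = ∑ xs : Fin N → X, M xs * NoiseAux.Fsum εstar hstar i₀ xs := by
    rw [hAdef, prob_pow_eq]
    refine Finset.sum_congr rfl fun xs _ => ?_
    simp only [NoiseAux.Fsum]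
    rw [Finset.mul_sum]
    refine Finset.sum_congr rfl fun ls _ => ?_
    refine Eq.trans (@if_congr ℝ _ _ (Classical.propDecidable _) (Classical.propDecidable _)
      _ _ _ _ (show ((fun i => (xs i, ls i)) ∈
          {s : Fin N → X × Bool | (s i₀).2 ≠ hstar (s i₀).1 ∧ ConsistentS s})
        ↔ (NoiseAux.Cons xs ls ∧ ls i₀ ≠ hstar (xs i₀)) from and_comm) (hprod xs ls) rfl) ?_
    split_ifs <;> simp
  set Cl : ℝ := εstar * (1 - εstar) * (Real.log (1 - εstar) - Real.log εstar) with hCl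
  have hlog : Real.log εstar ≤ Real.log (1 - εstar) := Real.log_le_log hε0 (by linarith)
  have hCl0 : 0 ≤ Cl := by
    rw [hCl]
    have h1 : (0:ℝ) ≤ 1 - εstar := by linarith
    have h2 : 0 ≤ Real.log (1 - εstar) - Real.log εstar := by linarith
    exact mul_nonneg (mul_nonneg hε0.le h1) h2
  have hdiff : εstar * Pc - A = ∑ xs : Fin N → X,
      M xs * (εstar * NoiseAux.Wsum εstar hstar xs - NoiseAux.Fsum εstar hstar i₀ xs) := by
    rw [hPc, hA, Finset.mul_sum, ← Finset.sum_sub_distrib]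
    exact Finset.sum_congr rfl fun xs _ => by ring
  have claim1 : A ≤ εstar * Pc := by
    have h0 : 0 ≤ εstar * Pc - A := by
      rw [hdiff]
      exact Finset.sum_nonneg fun xs _ => mul_nonneg (hMnn xs)
        (NoiseAux.T_bounds (hs := hstar) (xs := xs) (i₀ := i₀) hε0 hε).1
    linarith
  have hdm : ∀ x, mD x ≤ dmax D := by
    intro x
    have h : mD x = D.prob {a | a.1 = x} := (prob_fst_eq D x).symm
    rw [h]
    exact le_ciSup (f := fun x : X => D.prob {a : X × Bool | a.1 = x})
      (Set.Finite.bddAbove (Set.finite_range _)) x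
  have hsum2 : ∑ x, mD x * mD x ≤ dmax D := by
    calc ∑ x, mD x * mD x ≤ ∑ x, dmax D * mD x :=
          Finset.sum_le_sum fun x _ => mul_le_mul_of_nonneg_right (hdm x) (hmnn x)
      _ = dmax D := by rw [← Finset.mul_sum, hm1, mul_one]
  have hkk : ∀ xs : Fin N → X, ((NoiseAux.kk xs i₀ - 1 : ℕ) : ℝ)
      = ∑ i ∈ Finset.univ.erase i₀, (if xs i = xs i₀ then (1:ℝ) else 0) := by
    intro xs
    have h1 : (NoiseAux.kk xs i₀ - 1 : ℕ)
        = (((Finset.univ.erase i₀)).filter fun i => xs i = xs i₀).card := by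
      have h2 : ((Finset.univ.erase i₀)).filter (fun i => xs i = xs i₀)
          = ((Finset.univ.filter fun i => xs i = xs i₀)).erase i₀ := Finset.filter_erase _ _ _
      have hmem : i₀ ∈ Finset.univ.filter (fun i => xs i = xs i₀) :=
        Finset.mem_filter.2 ⟨Finset.mem_univ _, rfl⟩
      rw [h2, Finset.card_erase_of_mem hmem]
      rfl
    rw [h1, Finset.card_filter]
    push_cast
    rfl
  have hcsum : ∑ xs : Fin N → X, M xs * ((NoiseAux.kk xs i₀ - 1 : ℕ) : ℝ)
      ≤ ((N:ℝ) - 1) * dmax D := by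
    calc ∑ xs : Fin N → X, M xs * ((NoiseAux.kk xs i₀ - 1 : ℕ) : ℝ)
        = ∑ xs : Fin N → X, ∑ i ∈ Finset.univ.erase i₀,
            M xs * (if xs i = xs i₀ then (1:ℝ) else 0) :=
          Finset.sum_congr rfl fun xs _ => by rw [hkk xs, Finset.mul_sum]
      _ = ∑ i ∈ Finset.univ.erase i₀, ∑ xs : Fin N → X,
            M xs * (if xs i = xs i₀ then (1:ℝ) else 0) := Finset.sum_comm
      _ ≤ ∑ _i ∈ Finset.univ.erase i₀, dmax D := by
          refine Finset.sum_le_sum fun i hi => ?_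
          have hne : i ≠ i₀ := (Finset.mem_erase.1 hi).1
          exact le_trans (le_of_eq (count_eq mD hm1 i₀ i hne)) hsum2
      _ = ((N:ℝ) - 1) * dmax D := by
          rw [Finset.sum_const, Finset.card_erase_of_mem (Finset.mem_univ i₀),
            Finset.card_univ, Fintype.card_fin, nsmul_eq_mul, Nat.cast_sub hN]
          norm_num
  have claim2 : εstar * Pc - A ≤ Cl * (((N:ℝ) - 1) * dmax D) := by
    rw [hdiff]
    calc ∑ xs : Fin N → X,
          M xs * (εstar * NoiseAux.Wsum εstar hstar xs - NoiseAux.Fsum εstar hstar i₀ xs)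
        ≤ ∑ xs : Fin N → X, M xs * (Cl * ((NoiseAux.kk xs i₀ - 1 : ℕ) : ℝ)) := by
          refine Finset.sum_le_sum fun xs _ => ?_
          refine mul_le_mul_of_nonneg_left ?_ (hMnn xs)
          exact le_trans (NoiseAux.T_bounds (hs := hstar) (xs := xs) (i₀ := i₀) hε0 hε).2
            (NoiseAux.key_ineq hε0 hε _)
      _ = Cl * ∑ xs : Fin N → X, M xs * ((NoiseAux.kk xs i₀ - 1 : ℕ) : ℝ) := by
          rw [Finset.mul_sum]
          exact Finset.sum_congr rfl fun xs _ => by ring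
      _ ≤ Cl * (((N:ℝ) - 1) * dmax D) := mul_le_mul_of_nonneg_left hcsum hCl0
  have habs : |Real.log 2 * (εstar * Real.logb 2 εstar + εstar * binEnt εstar)| = Cl := by
    have hl2 : Real.log 2 ≠ 0 := ne_of_gt (Real.log_pos one_lt_two)
    have hid : Real.log 2 * (εstar * Real.logb 2 εstar + εstar * binEnt εstar) = -Cl := by
      rw [hCl]
      unfold binEnt Real.logb
      field_simp
      ring
    rw [hid, abs_neg, abs_of_nonneg hCl0]
  have part1 : A / Pc ≤ εstar := (div_le_iff₀ hcons).2 claim1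
  refine ⟨part1, ?_⟩
  rw [abs_of_nonpos (sub_nonpos.2 part1), habs]
  have heq : -(A / Pc - εstar) = (εstar * Pc - A) / Pc := by
    rw [neg_sub, sub_div, mul_div_assoc, div_self hcons.ne', mul_one]
  rw [heq, div_le_div_iff_of_pos_right hcons]
  calc εstar * Pc - A ≤ Cl * (((N:ℝ) - 1) * dmax D) := claim2
    _ = Cl * ((N:ℝ) - 1) * dmax D := by ring
end

section
/- Let D be a distribution on a finite set X × {0,1}, let S ∼ D^N with P(S consistent) > 0, and let A be a (possibly randomized) interpolating learning rule taking values in a finite set H ∪ {⋆} of hypotheses h : X → {0,1} plus a token ⋆: A(S) satisfies L_S(A(S)) = 0 whenever S is consistent, and A(S) = ⋆ whenever S is inconsistent. Then E_{S,A(S)}[L_D(A(S)) | S consistent] ≤ 1 − 2^{−I(S; A(S))/(N·P(S consistent))}, where I(S; A(S)) is the mutual information (in bits) between the random training set S and the random output A(S), and L_D(h) = P_{(X,Y)∼D}(h(X) ≠ Y). -/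
open Finset

/-- Risk extended to `Option`, where `none` is the token `⋆` with prescribed risk `rstar`. -/
noncomputable def riskO {X : Type*} [Fintype X] (D : FinDist (X × Bool)) (rstar : ℝ) :
    Option (X → Bool) → ℝ
  | some h => risk D h
  | none => rstar

/-- Mutual information (in bits) between the two coordinates of a joint
finitely supported distribution. -/
noncomputable def mutInfo {α β : Type*} [Fintype α] [Fintype β] (q : FinDist (α × β)) : ℝ :=
  ∑ u : α, ∑ v : β, q.p (u, v) *
    Real.logb 2 (q.p (u, v) / ((∑ v' : β, q.p (u, v')) * (∑ u' : α, q.p (u', v))))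

open scoped Classical

lemma log_sum_aux {ι : Type*} [Fintype ι] (a b : ι → ℝ)
    (ha : ∀ i, 0 ≤ a i) (hb : ∀ i, 0 ≤ b i) (hba : ∀ i, b i = 0 → a i = 0) :
    (∑ i, a i) * Real.log ((∑ i, a i) / (∑ i, b i)) ≤ ∑ i, a i * Real.log (a i / b i) := by
  set A := ∑ i, a i with hA
  set B := ∑ i, b i with hB
  by_cases hA0 : A = 0
  · have hz : ∀ i ∈ (Finset.univ : Finset ι), a i = 0 :=
      (Finset.sum_eq_zero_iff_of_nonneg (fun i _ => ha i)).1 hA0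
    rw [hA0]
    simp only [zero_mul]
    apply Finset.sum_nonneg
    intro i _
    rw [hz i (Finset.mem_univ i)]
    simp
  · have hApos : 0 < A := lt_of_le_of_ne (Finset.sum_nonneg fun i _ => ha i) (Ne.symm hA0)
    have hB0 : B ≠ 0 := by
      intro h
      have : ∀ i ∈ Finset.univ, b i = 0 :=
        (Finset.sum_eq_zero_iff_of_nonneg (fun i _ => hb i)).1 h
      have : A = 0 := Finset.sum_eq_zero fun i hi => hba i (this i hi)
      exact hA0 this
    have hBpos : 0 < B := lt_of_le_of_ne (Finset.sum_nonneg fun i _ => hb i) (Ne.symm hB0)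
    have key : ∀ i, a i * Real.log (A / B) + (a i - (A / B) * b i) ≤ a i * Real.log (a i / b i) := by
      intro i
      by_cases hai : a i = 0
      · rw [hai]
        have : 0 ≤ (A / B) * b i := mul_nonneg (div_nonneg hApos.le hBpos.le) (hb i)
        simp; linarith
      · have haipos : 0 < a i := lt_of_le_of_ne (ha i) (Ne.symm hai)
        have hbipos : 0 < b i := by
          rcases lt_or_eq_of_le (hb i) with h | h
          · exact h
          · exact absurd (hba i h.symm) hai
        set x := (a i * B) / (b i * A) with hx
        have hxpos : 0 < x := div_pos (mul_pos haipos hBpos) (mul_pos hbipos hApos)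
        have hlog : 1 - x⁻¹ ≤ Real.log x := by
          have := Real.log_le_sub_one_of_pos (inv_pos.2 hxpos)
          rw [Real.log_inv] at this
          linarith
        have hsplit : Real.log (a i / b i) = Real.log (A / B) + Real.log x := by
          rw [← Real.log_mul (by positivity) (ne_of_gt hxpos)]
          congr 1
          field_simp [hx]
          rw [hx]; field_simp
        have hxinv : a i * x⁻¹ = (A / B) * b i := by
          rw [hx]
          field_simp
        rw [hsplit, mul_add]
        have := mul_le_mul_of_nonneg_left hlog haipos.le
        rw [mul_sub, hxinv] at this
        linarith
    calc A * Real.log (A / B) = ∑ i, (a i * Real.log (A / B) + (a i - (A / B) * b i)) := by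
          rw [Finset.sum_add_distrib, ← Finset.sum_mul, Finset.sum_sub_distrib, ← Finset.mul_sum]
          rw [← hA, ← hB]
          field_simp
          ring
      _ ≤ ∑ i, a i * Real.log (a i / b i) := Finset.sum_le_sum fun i _ => key i

lemma logb_sum_aux {ι : Type*} [Fintype ι] (a b : ι → ℝ)
    (ha : ∀ i, 0 ≤ a i) (hb : ∀ i, 0 ≤ b i) (hba : ∀ i, b i = 0 → a i = 0) :
    (∑ i, a i) * Real.logb 2 ((∑ i, a i) / (∑ i, b i)) ≤ ∑ i, a i * Real.logb 2 (a i / b i) := by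
  have h2 : 0 < Real.log 2 := Real.log_pos one_lt_two
  have := log_sum_aux a b ha hb hba
  simp only [Real.logb]
  rw [← mul_div_assoc]
  have hsum : ∑ i, a i * (Real.log (a i / b i) / Real.log 2)
      = (∑ i, a i * Real.log (a i / b i)) / Real.log 2 := by
    rw [Finset.sum_div]
    congr 1; ext i; ring
  rw [hsum]
  exact div_le_div_of_nonneg_right this h2.le


lemma risk_nonneg {X : Type*} [Fintype X] (D : FinDist (X × Bool)) (h : X → Bool) :
    0 ≤ risk D h :=
  Finset.sum_nonneg fun a _ => Set.indicator_nonneg (fun x _ => D.nonneg x) a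

lemma one_sub_risk {X : Type*} [Fintype X] (D : FinDist (X × Bool)) (h : X → Bool) :
    1 - risk D h = ∑ a : X × Bool, (if h a.1 = a.2 then D.p a else 0) := by
  rw [← D.sum_one, risk, FinDist.prob, ← Finset.sum_sub_distrib]
  congr 1; ext a
  rw [Set.indicator_apply]
  by_cases hh : h a.1 = a.2 <;> simp [hh]

lemma risk_le_one {X : Type*} [Fintype X] (D : FinDist (X × Bool)) (h : X → Bool) :
    risk D h ≤ 1 := by
  have := one_sub_risk D h
  have h2 : 0 ≤ ∑ a : X × Bool, (if h a.1 = a.2 then D.p a else 0) :=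
    Finset.sum_nonneg fun a _ => by split_ifs; exacts [D.nonneg a, le_rfl]
  linarith

lemma interp_prob {X : Type*} [Fintype X] (D : FinDist (X × Bool)) (h : X → Bool) (N : ℕ) :
    ∑ s : Fin N → X × Bool, (if Interpolates h s then (D.pow N).p s else 0)
      = (1 - risk D h) ^ N := by
  rw [one_sub_risk]
  rw [Fintype.sum_pow (fun a => if h a.1 = a.2 then D.p a else 0) N]
  congr 1; ext s
  by_cases hi : Interpolates h s
  · rw [if_pos hi]
    show (D.pow N).p s = _
    unfold FinDist.pow
    simp only
    congr 1; ext i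
    rw [if_pos (hi i)]
  · rw [if_neg hi]
    unfold Interpolates at hi
    push_neg at hi
    obtain ⟨i, hi⟩ := hi
    exact (Finset.prod_eq_zero (Finset.mem_univ i) (by rw [if_neg hi])).symm


/-- for any interpolating learning rule `A` (described by the joint law `q`
of `(S, A(S))`, with `A(S) = ⋆ = none` exactly on inconsistent samples and
`A(S)` interpolating on consistent samples),
`E[L_D(A(S)) | S consistent] ≤ 1 − 2^{−I(S;A(S))/(N·P(S consistent))}`. -/
theorem interpolator_mutual_information_risk_bound
    (X : Type) [Fintype X] [DecidableEq X] (D : FinDist (X × Bool))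
    (N : ℕ) (hN : 1 ≤ N)
    (q : FinDist ((Fin N → X × Bool) × Option (X → Bool)))
    (hmarg : ∀ s, ∑ h : Option (X → Bool), q.p (s, h) = (D.pow N).p s)
    (hinterp : ∀ s h, ConsistentS s → q.p (s, some h) ≠ 0 → Interpolates h s)
    (hnostar : ∀ s, ConsistentS s → q.p (s, none) = 0)
    (hstar : ∀ s h, ¬ ConsistentS s → q.p (s, some h) = 0)
    (hcons : 0 < (D.pow N).prob {s | ConsistentS s}) :
    (∑ sh : (Fin N → X × Bool) × Option (X → Bool),
        (if ConsistentS sh.1 then q.p sh * riskO D 0 sh.2 else 0)) /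
        (D.pow N).prob {s | ConsistentS s} ≤
      1 - (2 : ℝ) ^
        (-(mutInfo q) / ((N : ℝ) * (D.pow N).prob {s | ConsistentS s})) := by
  classical
  set p : (Fin N → X × Bool) → ℝ := (D.pow N).p with hp
  set r : Option (X → Bool) → ℝ := fun h => ∑ s, q.p (s, h) with hr
  set Pc : ℝ := (D.pow N).prob {s | ConsistentS s} with hPc
  have hq0 : ∀ sh, 0 ≤ q.p sh := q.nonneg
  have hp0 : ∀ s, 0 ≤ p s := (D.pow N).nonneg
  have hr0 : ∀ h, 0 ≤ r h := fun h => Finset.sum_nonneg fun s _ => hq0 _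
  have hqlep : ∀ s h, q.p (s, h) ≤ p s := by
    intro s h
    rw [← hmarg s]
    exact Finset.single_le_sum (fun h' _ => hq0 _) (Finset.mem_univ h)
  have hqler : ∀ s h, q.p (s, h) ≤ r h := fun s h =>
    Finset.single_le_sum (f := fun s' => q.p (s', h)) (fun s' _ => hq0 _) (Finset.mem_univ s)
  have hsupp : ∀ s h, q.p (s, some h) ≠ 0 → Interpolates h s := by
    intro s h hne
    by_cases hc : ConsistentS s
    · exact hinterp s h hc hne
    · exact absurd (hstar s h hc) hne
  have hPceq : Pc = ∑ s, (if ConsistentS s then p s else 0) := by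
    rw [hPc, FinDist.prob]
    exact Finset.sum_congr rfl fun s _ => by rw [Set.indicator_apply]; rfl
  have hnone : ∀ s, q.p (s, none) = (if ConsistentS s then 0 else p s) := by
    intro s
    by_cases hc : ConsistentS s
    · rw [if_pos hc]; exact hnostar s hc
    · rw [if_neg hc, ← hmarg s, Fintype.sum_option]
      rw [Finset.sum_eq_zero fun h _ => hstar s h hc]
      ring
  have hsum_none : ∑ s, q.p (s, none) = 1 - Pc := by
    rw [hPceq]
    have h1 : (1 : ℝ) = ∑ s, p s := ((D.pow N).sum_one).symm
    rw [h1, ← Finset.sum_sub_distrib]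
    exact Finset.sum_congr rfl fun s _ => by
      rw [hnone s]; by_cases hc : ConsistentS s <;> simp [hc]
  have hsum_some : ∑ h : X → Bool, r (some h) = Pc := by
    have hswap : ∑ h : X → Bool, r (some h) = ∑ s, ∑ h : X → Bool, q.p (s, some h) :=
      Finset.sum_comm
    have hrow : ∀ s, ∑ h : X → Bool, q.p (s, some h) = p s - q.p (s, none) := by
      intro s
      have := hmarg s
      rw [Fintype.sum_option] at this
      linarith
    rw [hswap, Finset.sum_congr rfl fun s _ => hrow s, Finset.sum_sub_distrib,
      hsum_none, (D.pow N).sum_one]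
    ring
  -- the numerator
  have hnum : (∑ sh : (Fin N → X × Bool) × Option (X → Bool),
      (if ConsistentS sh.1 then q.p sh * riskO D 0 sh.2 else 0))
      = ∑ h : X → Bool, r (some h) * risk D h := by
    rw [Fintype.sum_prod_type]
    have hrow : ∀ s, (∑ o : Option (X → Bool),
        (if ConsistentS s then q.p (s, o) * riskO D 0 o else 0))
        = ∑ h : X → Bool, q.p (s, some h) * risk D h := by
      intro s
      by_cases hc : ConsistentS s
      · simp only [if_pos hc, Fintype.sum_option]
        have : q.p (s, none) * riskO D 0 none = 0 := by
          rw [hnostar s hc]; ring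
        rw [this, zero_add]
        rfl
      · simp only [if_neg hc, Finset.sum_const_zero]
        exact (Finset.sum_eq_zero fun h _ => by rw [hstar s h hc, zero_mul]).symm
    rw [Finset.sum_congr rfl fun s _ => hrow s, Finset.sum_comm]
    exact Finset.sum_congr rfl fun h _ => by rw [← Finset.sum_mul]
  -- mutual information rewritten with marginals
  have hmut : mutInfo q = ∑ v : Option (X → Bool), ∑ s,
      q.p (s, v) * Real.logb 2 (q.p (s, v) / (p s * r v)) := by
    unfold mutInfo
    rw [Finset.sum_comm]
    exact Finset.sum_congr rfl fun v _ => Finset.sum_congr rfl fun s _ => by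
      rw [hmarg s]
  -- risk < 1 whenever r (some h) ≠ 0
  have hrle : ∀ h : X → Bool, r (some h) ≤ (1 - risk D h) ^ N := by
    intro h
    rw [← interp_prob D h N, hr]
    apply Finset.sum_le_sum
    intro s _
    by_cases hqs : q.p (s, some h) = 0
    · rw [hqs]; split_ifs; exacts [hp0 s, le_rfl]
    · rw [if_pos (hsupp s h hqs)]; exact hqlep s _
  have hrisk1 : ∀ h : X → Bool, r (some h) ≠ 0 → risk D h < 1 := by
    intro h hne
    have hrpos : 0 < r (some h) := lt_of_le_of_ne (hr0 _) (Ne.symm hne)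
    by_contra hge
    push_neg at hge
    have h0 : 1 - risk D h = 0 := le_antisymm (by linarith)
      (by
        have h2 : 0 ≤ ∑ a : X × Bool, (if h a.1 = a.2 then D.p a else 0) :=
          Finset.sum_nonneg fun a _ => by split_ifs; exacts [D.nonneg a, le_rfl]
        rw [one_sub_risk]; exact h2)
    have := hrle h
    rw [h0, zero_pow (by omega)] at this
    linarith
  -- lower bound for the `none` column
  have hlb0 : (0 : ℝ) ≤ ∑ s, q.p (s, none) *
      Real.logb 2 (q.p (s, none) / (p s * r none)) := by
    have key := logb_sum_aux (fun s => q.p (s, none)) (fun s => p s * r none)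
      (fun s => hq0 _) (fun s => mul_nonneg (hp0 s) (hr0 _))
      (by
        intro s hbs
        rcases mul_eq_zero.1 hbs with h1 | h1
        · exact le_antisymm (h1 ▸ hqlep s _) (hq0 _)
        · exact le_antisymm (h1 ▸ hqler s _) (hq0 _))
    have hsb : ∑ s, p s * r none = r none := by
      rw [← Finset.sum_mul, (D.pow N).sum_one, one_mul]
    rw [hsb] at key
    refine le_trans ?_ key
    by_cases hrn : r none = 0
    · rw [show (∑ s, q.p (s, none)) = r none from rfl, hrn]; simp
    · rw [show (∑ s, q.p (s, none)) = r none from rfl, div_self hrn]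
      simp
  -- lower bound for each `some h` column
  have hlb : ∀ h : X → Bool,
      (N : ℝ) * r (some h) * (-Real.logb 2 (1 - risk D h)) ≤
      ∑ s, q.p (s, some h) * Real.logb 2 (q.p (s, some h) / (p s * r (some h))) := by
    intro h
    by_cases hr0h : r (some h) = 0
    · have hz : ∀ s, q.p (s, some h) = 0 := fun s =>
        le_antisymm (hr0h ▸ hqler s _) (hq0 _)
      rw [hr0h]
      simp [hz]
    · have hrpos : 0 < r (some h) := lt_of_le_of_ne (hr0 _) (Ne.symm hr0h)
      have hrisk : risk D h < 1 := hrisk1 h hr0h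
      have hpow : 0 < (1 - risk D h) ^ N := pow_pos (by linarith) N
      have key := logb_sum_aux (fun s => q.p (s, some h))
        (fun s => (if Interpolates h s then p s else 0) * r (some h))
        (fun s => hq0 _)
        (fun s => mul_nonneg (by split_ifs; exacts [hp0 s, le_rfl]) (hr0 _))
        (by
          intro s hbs
          by_contra hne
          rw [if_pos (hsupp s h hne)] at hbs
          rcases mul_eq_zero.1 hbs with h1 | h1
          · exact hne (le_antisymm (h1 ▸ hqlep s _) (hq0 _))
          · exact hr0h h1)
      have hsb : ∑ s, (if Interpolates h s then p s else 0) * r (some h)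
          = (1 - risk D h) ^ N * r (some h) := by
        rw [← Finset.sum_mul, interp_prob D h N]
      rw [hsb, show (∑ s, q.p (s, some h)) = r (some h) from rfl] at key
      have hdiv : r (some h) / ((1 - risk D h) ^ N * r (some h))
          = ((1 - risk D h) ^ N)⁻¹ := by
        field_simp
      rw [hdiv, Real.logb_inv, Real.logb_pow] at key
      have hsum_eq : (∑ s, q.p (s, some h) * Real.logb 2 (q.p (s, some h) /
            ((if Interpolates h s then p s else 0) * r (some h))))
          = ∑ s, q.p (s, some h) *
            Real.logb 2 (q.p (s, some h) / (p s * r (some h))) := by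
        apply Finset.sum_congr rfl
        intro s _
        by_cases hqs : q.p (s, some h) = 0
        · rw [hqs]; ring
        · rw [if_pos (hsupp s h hqs)]
      rw [hsum_eq] at key
      calc (N : ℝ) * r (some h) * (-Real.logb 2 (1 - risk D h))
          = r (some h) * -((N : ℝ) * Real.logb 2 (1 - risk D h)) := by ring
        _ ≤ _ := key
  -- the total mutual-information lower bound
  have hMlb : (N : ℝ) * ∑ h : X → Bool, r (some h) * (-Real.logb 2 (1 - risk D h))
      ≤ mutInfo q := by
    rw [hmut, Fintype.sum_option]
    have h1 := Finset.sum_le_sum (fun h (_ : h ∈ (Finset.univ : Finset (X → Bool))) => hlb h)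
    rw [Finset.mul_sum]
    calc (∑ h : X → Bool, (N : ℝ) * (r (some h) * (-Real.logb 2 (1 - risk D h))))
        = ∑ h : X → Bool, (N : ℝ) * r (some h) * (-Real.logb 2 (1 - risk D h)) := by
          exact Finset.sum_congr rfl fun h _ => by ring
      _ ≤ ∑ h : X → Bool, ∑ s, q.p (s, some h) *
            Real.logb 2 (q.p (s, some h) / (p s * r (some h))) := h1
      _ ≤ _ := le_add_of_nonneg_left hlb0
  -- final assembly
  have hPcpos : 0 < Pc := hcons
  have hNpos : (0 : ℝ) < (N : ℝ) := by exact_mod_cast hN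
  set t : (X → Bool) → ℝ := fun h => -Real.logb 2 (1 - risk D h) with ht
  set w : (X → Bool) → ℝ := fun h => r (some h) / Pc with hw
  have hw0 : ∀ h, 0 ≤ w h := fun h => div_nonneg (hr0 _) hPcpos.le
  have hw1 : ∑ h : X → Bool, w h = 1 := by
    rw [hw]
    simp only
    rw [← Finset.sum_div, hsum_some, div_self (ne_of_gt hPcpos)]
  set c : ℝ := mutInfo q / ((N : ℝ) * Pc) with hc
  have hwt : ∑ h : X → Bool, w h * t h ≤ c := by
    have h1 : ∑ h : X → Bool, r (some h) * t h ≤ mutInfo q / (N : ℝ) := by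
      rw [le_div_iff₀ hNpos]
      calc (∑ h : X → Bool, r (some h) * t h) * (N : ℝ)
          = (N : ℝ) * ∑ h : X → Bool, r (some h) * t h := by ring
        _ ≤ mutInfo q := hMlb
    have h2 : ∑ h : X → Bool, w h * t h
        = (∑ h : X → Bool, r (some h) * t h) / Pc := by
      rw [Finset.sum_div]
      exact Finset.sum_congr rfl fun h _ => by rw [hw]; ring
    rw [h2, hc, ← div_div]
    exact div_le_div_of_nonneg_right h1 hPcpos.le
  -- Jensen
  have hjensen : (2 : ℝ) ^ (-(∑ h : X → Bool, w h * t h))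
      ≤ ∑ h : X → Bool, w h * (2 : ℝ) ^ (-(t h)) := by
    have hconv := convexOn_exp.map_sum_le (t := Finset.univ)
      (w := w) (p := fun h => -(t h) * Real.log 2)
      (fun h _ => hw0 h) hw1 (fun h _ => Set.mem_univ _)
    have hsum : ∑ h : X → Bool, w h * (-(t h) * Real.log 2)
        = Real.log 2 * (-(∑ h : X → Bool, w h * t h)) := by
      calc ∑ h : X → Bool, w h * (-(t h) * Real.log 2)
          = ∑ h : X → Bool, -(w h * t h) * Real.log 2 :=
            Finset.sum_congr rfl fun h _ => by ring
        _ = (∑ h : X → Bool, -(w h * t h)) * Real.log 2 :=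
            (Finset.sum_mul _ _ _).symm
        _ = (-(∑ h : X → Bool, w h * t h)) * Real.log 2 := by
            rw [Finset.sum_neg_distrib]
        _ = Real.log 2 * (-(∑ h : X → Bool, w h * t h)) := mul_comm _ _
    have hR : ∀ h : X → Bool, Real.exp (-(t h) * Real.log 2) = (2 : ℝ) ^ (-(t h)) := by
      intro h
      rw [Real.rpow_def_of_pos two_pos, mul_comm]
    calc (2 : ℝ) ^ (-(∑ h : X → Bool, w h * t h))
        = Real.exp (Real.log 2 * (-(∑ h : X → Bool, w h * t h))) :=
          Real.rpow_def_of_pos two_pos _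
      _ = Real.exp (∑ h : X → Bool, w h * (-(t h) * Real.log 2)) := by rw [hsum]
      _ ≤ ∑ h : X → Bool, w h * Real.exp (-(t h) * Real.log 2) := by
          simpa [smul_eq_mul] using hconv
      _ = ∑ h : X → Bool, w h * (2 : ℝ) ^ (-(t h)) :=
          Finset.sum_congr rfl fun h _ => by rw [hR h]
  -- pointwise identity for the risk
  have hterm : ∀ h : X → Bool, w h * risk D h = w h * (1 - (2 : ℝ) ^ (-(t h))) := by
    intro h
    by_cases hzr : r (some h) = 0
    · have hwz : w h = 0 := by simp only [hw]; rw [hzr, zero_div]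
      rw [hwz, zero_mul, zero_mul]
    · have hriskl := hrisk1 h hzr
      have h1 : (2 : ℝ) ^ (-(t h)) = 1 - risk D h := by
        simp only [ht, neg_neg]
        exact Real.rpow_logb two_pos (by norm_num) (by linarith)
      rw [h1]
      ring
  have hfinal : (∑ h : X → Bool, r (some h) * risk D h) / Pc
      = ∑ h : X → Bool, w h * risk D h := by
    rw [Finset.sum_div]
    exact Finset.sum_congr rfl fun h _ => by simp only [hw]; ring
  rw [hnum, hfinal]
  have hsum2 : ∑ h : X → Bool, w h * risk D h
      = 1 - ∑ h : X → Bool, w h * (2 : ℝ) ^ (-(t h)) := by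
    rw [Finset.sum_congr rfl fun h _ => hterm h]
    calc ∑ h : X → Bool, w h * (1 - (2 : ℝ) ^ (-(t h)))
        = ∑ h : X → Bool, (w h - w h * (2 : ℝ) ^ (-(t h))) :=
          Finset.sum_congr rfl fun h _ => by ring
      _ = (∑ h : X → Bool, w h) - ∑ h : X → Bool, w h * (2 : ℝ) ^ (-(t h)) :=
          Finset.sum_sub_distrib _ _
      _ = _ := by rw [hw1]
  have hmono : (2 : ℝ) ^ (-(mutInfo q) / ((N : ℝ) * Pc)) ≤ (2 : ℝ) ^ (-(∑ h : X → Bool, w h * t h)) := by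
    apply Real.rpow_le_rpow_of_exponent_le one_le_two
    rw [neg_div, ← hc]
    exact neg_le_neg hwt
  linarith [hjensen, hmono, hsum2]
end
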